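/- Let X_1, …, X_m be independent random variables with X_i ∈ [0,1] for each i, let X = (1/m)·∑_{i=1}^m X_i, and let μ = E[X]. Then for all α ∈ [0,1] and β ≥ 0: Pr[X > (1+α)·μ + β] ≤ exp(−m·α·β/3) and Pr[X < (1−α)·μ − β] ≤ exp(−m·α·β/2). -/

import Mathlib

open MeasureTheory ProbabilityTheory Real

lemma aux_mgf_le {Ω : Type*} [MeasurableSpace Ω] (μ : Measure Ω) [IsProbabilityMeasure μ]
    (Y : Ω → ℝ) (hY : Measurable Y) (hb : ∀ᵐ ω ∂μ, Y ω ∈ Set.Icc (0:ℝ) 1) (t : ℝ) :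
    mgf Y μ t ≤ Real.exp ((Real.exp t - 1) * ∫ ω, Y ω ∂μ) := by
  have hint : Integrable Y μ :=
    (integrable_const (1:ℝ)).mono' hY.aestronglyMeasurable
      (hb.mono fun ω h => by rw [Real.norm_eq_abs, abs_le]; exact ⟨by linarith [h.1], h.2⟩)
  have hexp : Integrable (fun ω => Real.exp (t * Y ω)) μ :=
    (integrable_const (Real.exp |t|)).mono' (hY.const_mul t).exp.aestronglyMeasurable
      (hb.mono fun ω h => by
        rw [Real.norm_eq_abs, Real.abs_exp]
        refine Real.exp_le_exp.2 ?_
        calc t * Y ω ≤ |t * Y ω| := le_abs_self _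
          _ = |t| * |Y ω| := abs_mul _ _
          _ ≤ |t| * 1 := by
              gcongr
              rw [abs_le]; exact ⟨by linarith [h.1], h.2⟩
          _ = |t| := mul_one _)
  have step1 : mgf Y μ t ≤ 1 + (Real.exp t - 1) * ∫ ω, Y ω ∂μ := by
    rw [mgf]
    calc ∫ ω, Real.exp (t * Y ω) ∂μ
        ≤ ∫ ω, (1 + (Real.exp t - 1) * Y ω) ∂μ := by
          refine integral_mono_ae hexp ((integrable_const 1).add (hint.const_mul _)) ?_
          filter_upwards [hb] with ω h
          have hc := convexOn_exp.2 (Set.mem_univ (0:ℝ)) (Set.mem_univ t)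
            (by linarith [h.2] : (0:ℝ) ≤ 1 - Y ω) h.1 (by ring)
          simp only [smul_eq_mul, mul_zero, zero_add, Real.exp_zero, mul_one] at hc
          have : Real.exp (Y ω * t) ≤ 1 - Y ω + Y ω * Real.exp t := hc
          rw [mul_comm] at this
          nlinarith [this]
      _ = 1 + (Real.exp t - 1) * ∫ ω, Y ω ∂μ := by
          rw [integral_add (integrable_const 1) (hint.const_mul _), integral_const,
            integral_const_mul]
          simp
  have := Real.add_one_le_exp ((Real.exp t - 1) * ∫ ω, Y ω ∂μ)
  linarith

/-- a Chernoff-type bound with a multiplicative factor `α` and an additive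
slack `β` for the average of `m` independent `[0,1]`-valued random variables. -/
theorem stmt14 {Ω : Type*} [MeasurableSpace Ω]
    (μ : Measure Ω) [IsProbabilityMeasure μ]
    (m : ℕ) (hm : 1 ≤ m)
    (X : Fin m → Ω → ℝ)
    (hmeas : ∀ i, Measurable (X i))
    (hindep : iIndepFun X μ)
    (hbound : ∀ i, ∀ᵐ ω ∂μ, X i ω ∈ Set.Icc (0:ℝ) 1)
    (α β : ℝ) (hα : α ∈ Set.Icc (0:ℝ) 1) (hβ : 0 ≤ β) :
    μ {ω | (∑ i, X i ω) / m >
        (1 + α) * (∫ ω, (∑ i, X i ω) / m ∂μ) + β}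
      ≤ ENNReal.ofReal (Real.exp (-(m * α * β) / 3))
    ∧
    μ {ω | (∑ i, X i ω) / m <
        (1 - α) * (∫ ω, (∑ i, X i ω) / m ∂μ) - β}
      ≤ ENNReal.ofReal (Real.exp (-(m * α * β) / 2)) := by
  obtain ⟨hα0, hα1⟩ := hα
  have hm0 : (0:ℝ) < (m:ℝ) := by exact_mod_cast hm
  have hint : ∀ i, Integrable (X i) μ := fun i =>
    (integrable_const (1:ℝ)).mono' (hmeas i).aestronglyMeasurable
      ((hbound i).mono fun ω h => by rw [Real.norm_eq_abs, abs_le]; exact ⟨by linarith [h.1], h.2⟩)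
  have hexpi : ∀ (t:ℝ) (i : Fin m), Integrable (fun ω => Real.exp (t * X i ω)) μ := fun t i =>
    (integrable_const (Real.exp |t|)).mono' ((hmeas i).const_mul t).exp.aestronglyMeasurable
      ((hbound i).mono fun ω h => by
        rw [Real.norm_eq_abs, Real.abs_exp]
        refine Real.exp_le_exp.2 ?_
        calc t * X i ω ≤ |t * X i ω| := le_abs_self _
          _ = |t| * |X i ω| := abs_mul _ _
          _ ≤ |t| * 1 := by
              gcongr
              rw [abs_le]; exact ⟨by linarith [h.1], h.2⟩
          _ = |t| := mul_one _)
  set S : Ω → ℝ := ∑ i, X i with hSdef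
  have hSapp : ∀ ω, S ω = ∑ i, X i ω := fun ω => by simp [hSdef]
  have hexpS : ∀ t : ℝ, Integrable (fun ω => Real.exp (t * S ω)) μ :=
    fun t => hindep.integrable_exp_mul_sum hmeas (fun i _ => hexpi t i)
  set E : ℝ := ∑ i, ∫ ω, X i ω ∂μ with hEdef
  have hE0 : 0 ≤ E := Finset.sum_nonneg fun i _ =>
    integral_nonneg_of_ae ((hbound i).mono fun ω h => h.1)
  have hSE : ∫ ω, (∑ i, X i ω) ∂μ = E := integral_finset_sum _ (fun i _ => hint i)
  have hIeq : (∫ ω, (∑ i, X i ω) / m ∂μ) = E / m := by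
    rw [integral_div, hSE]
  have hmgf : ∀ t : ℝ, mgf S μ t ≤ Real.exp ((Real.exp t - 1) * E) := by
    intro t
    rw [hSdef, hindep.mgf_sum hmeas]
    calc ∏ i, mgf (X i) μ t
        ≤ ∏ i, Real.exp ((Real.exp t - 1) * ∫ ω, X i ω ∂μ) :=
          Finset.prod_le_prod (fun i _ => mgf_nonneg)
            (fun i _ => aux_mgf_le μ (X i) (hmeas i) (hbound i) t)
      _ = Real.exp ((Real.exp t - 1) * E) := by
          rw [← Real.exp_sum]
          congr 1
          rw [hEdef, Finset.mul_sum]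
  have hup : ∀ t : ℝ, 0 ≤ t → ∀ a : ℝ,
      μ {ω | a ≤ S ω} ≤ ENNReal.ofReal (Real.exp (-t * a + (Real.exp t - 1) * E)) := by
    intro t ht a
    have h1 := measure_ge_le_exp_mul_mgf (X := S) (μ := μ) a ht (hexpS t)
    rw [← ENNReal.ofReal_toReal (measure_ne_top μ _)]
    refine ENNReal.ofReal_le_ofReal ?_
    calc (μ {ω | a ≤ S ω}).toReal ≤ Real.exp (-t*a) * mgf S μ t := h1
      _ ≤ Real.exp (-t*a) * Real.exp ((Real.exp t - 1) * E) :=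
          mul_le_mul_of_nonneg_left (hmgf t) (Real.exp_pos _).le
      _ = Real.exp (-t * a + (Real.exp t - 1) * E) := (Real.exp_add _ _).symm
  have hlow : ∀ t : ℝ, t ≤ 0 → ∀ a : ℝ,
      μ {ω | S ω ≤ a} ≤ ENNReal.ofReal (Real.exp (-t * a + (Real.exp t - 1) * E)) := by
    intro t ht a
    have h1 := measure_le_le_exp_mul_mgf (X := S) (μ := μ) a ht (hexpS t)
    rw [← ENNReal.ofReal_toReal (measure_ne_top μ _)]
    refine ENNReal.ofReal_le_ofReal ?_
    calc (μ {ω | S ω ≤ a}).toReal ≤ Real.exp (-t*a) * mgf S μ t := h1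
      _ ≤ Real.exp (-t*a) * Real.exp ((Real.exp t - 1) * E) :=
          mul_le_mul_of_nonneg_left (hmgf t) (Real.exp_pos _).le
      _ = Real.exp (-t * a + (Real.exp t - 1) * E) := (Real.exp_add _ _).symm
  constructor
  · -- upper tail
    have hsub : {ω | (∑ i, X i ω) / m > (1 + α) * (∫ ω, (∑ i, X i ω) / m ∂μ) + β}
        ⊆ {ω | (1+α)*E + m*β ≤ S ω} := by
      intro ω hω
      simp only [Set.mem_setOf_eq, hIeq, gt_iff_lt] at hω ⊢
      rw [hSapp]
      have h' : ((1+α)*(E/m)+β) * m < (∑ i, X i ω) := (lt_div_iff₀ hm0).1 hω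
      have he : (1+α)*E + m*β = ((1+α)*(E/m)+β)*m := by field_simp
      linarith
    refine le_trans (measure_mono hsub) ?_
    set t := Real.log (1+α) with htdef
    have h1α : (0:ℝ) < 1 + α := by linarith
    have het : Real.exp t = 1 + α := Real.exp_log h1α
    have ht0 : 0 ≤ t := Real.log_nonneg (by linarith)
    have htl : 1 - (1+α)⁻¹ ≤ t := Real.one_sub_inv_le_log_of_pos h1α
    have ht1 : α ≤ t * (1+α) := by
      have h2 : (1 - (1+α)⁻¹) * (1+α) = α := by field_simp; ring
      nlinarith [mul_le_mul_of_nonneg_right htl h1α.le]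
    have ht3 : α / 3 ≤ t := by nlinarith
    refine le_trans (hup t ht0 _) (ENNReal.ofReal_le_ofReal (Real.exp_le_exp.2 ?_))
    rw [het]
    have k1 : α * E ≤ t * (1+α) * E := mul_le_mul_of_nonneg_right ht1 hE0
    have k2 : (α/3) * ((m:ℝ)*β) ≤ t * ((m:ℝ)*β) :=
      mul_le_mul_of_nonneg_right ht3 (by positivity)
    nlinarith [k1, k2]
  · -- lower tail
    rcases eq_or_lt_of_le hα1 with hα1' | hα1'
    · -- α = 1 : event is a.s. empty
      subst hα1'
      have hae : ∀ᵐ ω ∂μ, (0:ℝ) ≤ ∑ i, X i ω := by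
        have h := ae_all_iff.2 (fun i => (hbound i).mono fun ω h => h.1)
        filter_upwards [h] with ω h using Finset.sum_nonneg fun i _ => h i
      have hnull : μ {ω | ¬ (0:ℝ) ≤ ∑ i, X i ω} = 0 := ae_iff.1 hae
      have hsub : {ω | (∑ i, X i ω) / m < (1 - 1) * (∫ ω, (∑ i, X i ω) / m ∂μ) - β}
          ⊆ {ω | ¬ (0:ℝ) ≤ ∑ i, X i ω} := by
        intro ω hω
        simp only [Set.mem_setOf_eq] at hω ⊢
        push_neg
        have h2 : (∑ i, X i ω) / m < 0 := by linarith
        have h3 : (∑ i, X i ω) < 0 * m := (div_lt_iff₀ hm0).1 h2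
        linarith
      calc μ _ ≤ μ {ω | ¬ (0:ℝ) ≤ ∑ i, X i ω} := measure_mono hsub
        _ = 0 := hnull
        _ ≤ _ := zero_le
    · -- α < 1
      have h1α : (0:ℝ) < 1 - α := by linarith
      have hsub : {ω | (∑ i, X i ω) / m < (1 - α) * (∫ ω, (∑ i, X i ω) / m ∂μ) - β}
          ⊆ {ω | S ω ≤ (1-α)*E - m*β} := by
        intro ω hω
        simp only [Set.mem_setOf_eq, hIeq] at hω ⊢
        rw [hSapp]
        have h' : (∑ i, X i ω) < ((1-α)*(E/m) - β) * m := (div_lt_iff₀ hm0).1 hω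
        have he : (1-α)*E - m*β = ((1-α)*(E/m) - β)*m := by field_simp
        linarith
      refine le_trans (measure_mono hsub) ?_
      set t := Real.log (1-α) with htdef
      have het : Real.exp t = 1 - α := Real.exp_log h1α
      have ht0 : t ≤ 0 := Real.log_nonpos h1α.le (by linarith)
      have htl : 1 - (1-α)⁻¹ ≤ t := Real.one_sub_inv_le_log_of_pos h1α
      have ht1 : -t * (1-α) ≤ α := by
        have h2 : ((1-α)⁻¹ - 1) * (1-α) = α := by field_simp; ring
        nlinarith [mul_le_mul_of_nonneg_right htl h1α.le]
      have ht2 : t ≤ -α := by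
        have := Real.log_le_sub_one_of_pos h1α
        linarith
      refine le_trans (hlow t ht0 _) (ENNReal.ofReal_le_ofReal (Real.exp_le_exp.2 ?_))
      rw [het]
      have k1 : (-t * (1-α)) * E ≤ α * E := mul_le_mul_of_nonneg_right ht1 hE0
      have k2 : t * ((m:ℝ)*β) ≤ -α * ((m:ℝ)*β) :=
        mul_le_mul_of_nonneg_right ht2 (by positivity)
      have k3 : 0 ≤ α * ((m:ℝ)*β) := by positivity
      nlinarith [k1, k2, k3]
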